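/- For k ≥ 3, the circulant tournament T on vertices v_0,…,v_{2k} with arcs v_i → v_{i+j} (indices mod 2k+1) for j ∈ {1,…,k+1}\{k} is k-strong, and the set S = {v_1,…,v_{k-1}, v_{k+1}} is a strong safe set of T of cardinality k. -/

import Mathlib

variable {V : Type*}

/-- Reachability inside a vertex subset `S` of the digraph with arc relation `A`. -/
def ReachIn (A : V → V → Prop) (S : Set V) : V → V → Prop :=
  Relation.ReflTransGen (fun u v => u ∈ S ∧ v ∈ S ∧ A u v)

/-- The sub-digraph induced on `S` is strongly connected. -/
def StrongIn (A : V → V → Prop) (S : Set V) : Prop :=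
  ∀ u ∈ S, ∀ v ∈ S, ReachIn A S u v

/-- `M` is a strongly connected component of the sub-digraph induced on `S`. -/
def IsSCCIn (A : V → V → Prop) (S M : Set V) : Prop :=
  ∃ v ∈ S, M = {u | u ∈ S ∧ ReachIn A S u v ∧ ReachIn A S v u}

/-- There is an arc from (some vertex of) `M` to (some vertex of) `N`. -/
def HasArc (A : V → V → Prop) (M N : Set V) : Prop :=
  ∃ u ∈ M, ∃ w ∈ N, A u w

/-- `S` is a safe set of the sub-digraph of `A` induced on `H`. -/
def SafeSetIn (A : V → V → Prop) (H S : Set V) : Prop :=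
  S.Nonempty ∧ S ⊆ H ∧
    (∀ M, IsSCCIn A (H \ S) M → ∃ N, IsSCCIn A S N ∧ HasArc A M N) ∧
    (∀ M N, IsSCCIn A (H \ S) M → IsSCCIn A S N → HasArc A M N → M.ncard ≤ N.ncard)

/-- `S` is a safe set of the digraph with arc relation `A`. -/
def SafeSet (A : V → V → Prop) (S : Set V) : Prop :=
  SafeSetIn A Set.univ S

/-- `S` is a strong safe set: a safe set inducing a strongly connected sub-digraph. -/
def StrongSafeSet (A : V → V → Prop) (S : Set V) : Prop :=
  SafeSet A S ∧ StrongIn A S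

/-- A digraph is `k`-strong if it has at least `k+1` vertices and deleting any
fewer than `k` vertices leaves a strongly connected digraph. -/
def KStrong [Fintype V] (A : V → V → Prop) (k : ℕ) : Prop :=
  k + 1 ≤ Fintype.card V ∧ ∀ X : Set V, X.ncard < k → StrongIn A Xᶜ

/-- An oriented graph: no loops and no 2-cycles. -/
def Oriented (A : V → V → Prop) : Prop :=
  ∀ u v, A u v → ¬ A v u

/-- A tournament: no loops, and exactly one arc between any two distinct vertices. -/
def IsTournament (A : V → V → Prop) : Prop :=
  (∀ v, ¬ A v v) ∧ ∀ u v : V, u ≠ v → (A u v ↔ ¬ A v u)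

/-- An acyclic digraph: no arc lies on a directed cycle. -/
def AcyclicDigraph (A : V → V → Prop) : Prop :=
  ∀ u v, A u v → ¬ ReachIn A Set.univ v u

/-- `S` is in-dominating: every vertex outside `S` has an out-neighbour in `S`. -/
def InDominating (A : V → V → Prop) (S : Set V) : Prop :=
  ∀ v, v ∉ S → ∃ w ∈ S, A v w

/-- An independent set of a digraph: no arc between any two of its vertices. -/
def IndepSet (A : V → V → Prop) (I : Set V) : Prop :=
  ∀ u ∈ I, ∀ v ∈ I, u ≠ v → ¬ A u v

noncomputable def outDeg (A : V → V → Prop) (v : V) : ℕ := {w | A v w}.ncard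
noncomputable def inDeg (A : V → V → Prop) (v : V) : ℕ := {w | A w v}.ncard

/-- The safe number: minimum cardinality of a safe set. -/
noncomputable def safeNum (A : V → V → Prop) : ℕ :=
  sInf {n | ∃ S : Set V, SafeSet A S ∧ S.ncard = n}

/-- The strong safe number: minimum cardinality of a strong safe set. -/
noncomputable def strongSafeNum (A : V → V → Prop) : ℕ :=
  sInf {n | ∃ S : Set V, StrongSafeSet A S ∧ S.ncard = n}

/-- The sub-digraph induced on `S` is acyclic. -/
def AcyclicIn (A : V → V → Prop) (S : Set V) : Prop :=
  ∀ u ∈ S, ∀ v ∈ S, A u v → ¬ ReachIn A S v u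



namespace Stmt12

open Fin.NatCast

def Arc (k : ℕ) : Fin (2*k+1) → Fin (2*k+1) → Prop := fun i j =>
  ∃ t : ℕ, 1 ≤ t ∧ t ≤ k + 1 ∧ t ≠ k ∧ j.val = (i.val + t) % (2 * k + 1)

def SS (k : ℕ) : Set (Fin (2*k+1)) := {v | (1 ≤ v.val ∧ v.val ≤ k - 1) ∨ v.val = k + 1}

def M2 (k : ℕ) : Set (Fin (2*k+1)) := {v | v.val = k ∨ (k+2 ≤ v.val ∧ v.val ≤ 2*k)}

def gS (k : ℕ) : ℕ → Fin (2*k+1) := fun i =>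
  ((if i < k - 1 then i + 1 else if i = k - 1 then k + 1 else 1 : ℕ) : Fin (2*k+1))

def gM (k : ℕ) : ℕ → Fin (2*k+1) := fun i =>
  ((if i = 0 then k else if i ≤ k - 1 then k + 1 + i else k : ℕ) : Fin (2*k+1))

variable {k : ℕ}

lemma val_cast (a : ℕ) : ((a : Fin (2*k+1))).val = a % (2*k+1) := Fin.val_natCast a _

lemma val_cast_lt {a : ℕ} (h : a < 2*k+1) : ((a : Fin (2*k+1))).val = a := by
  rw [val_cast, Nat.mod_eq_of_lt h]

lemma cast_inj {a b : ℕ} (ha : a < 2*k+1) (hb : b < 2*k+1)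
    (h : (a : Fin (2*k+1)) = (b : Fin (2*k+1))) : a = b := by
  have := congrArg Fin.val h
  rwa [val_cast_lt ha, val_cast_lt hb] at this

lemma cast_add_n (a : ℕ) : ((a + (2*k+1) : ℕ) : Fin (2*k+1)) = (a : Fin (2*k+1)) := by
  rw [Nat.cast_add, Fin.natCast_self, add_zero]

lemma arcN (u : Fin (2*k+1)) (t : ℕ) (h1 : 1 ≤ t) (h2 : t ≤ k+1) (h3 : t ≠ k) :
    Arc k u (u + (t : Fin (2*k+1))) := by
  refine ⟨t, h1, h2, h3, ?_⟩
  show ((u.val + ((t : Fin (2*k+1))).val) % (2*k+1)) = _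
  rw [val_cast, Nat.add_mod_mod]

lemma arcNN (a t : ℕ) (h1 : 1 ≤ t) (h2 : t ≤ k+1) (h3 : t ≠ k) :
    Arc k (a : Fin (2*k+1)) (((a+t : ℕ)) : Fin (2*k+1)) := by
  have h := arcN (k := k) (a : Fin (2*k+1)) t h1 h2 h3
  rwa [← Nat.cast_add] at h

lemma reach_chain {V : Type*} (A : V → V → Prop) (S : Set V) (g : ℕ → V) :
    ∀ b a, a ≤ b → (∀ i, a ≤ i → i < b → g i ∈ S ∧ g (i+1) ∈ S ∧ A (g i) (g (i+1))) →
    ReachIn A S (g a) (g b) := by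
  intro b
  induction b with
  | zero =>
    intro a ha _
    have : a = 0 := Nat.le_zero.mp ha
    subst this; exact Relation.ReflTransGen.refl
  | succ c ih =>
    intro a ha h
    rcases Nat.lt_or_ge a (c+1) with h1 | h1
    · have hac : a ≤ c := Nat.lt_succ_iff.mp h1
      exact (ih a hac (fun i hi1 hi2 => h i hi1 (by omega))).tail (h c hac (by omega))
    · have : a = c + 1 := le_antisymm ha h1
      subst this; exact Relation.ReflTransGen.refl

lemma reach_cycle {V : Type*} (A : V → V → Prop) (S : Set V) (g : ℕ → V) (m : ℕ)
    (hg : g m = g 0)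
    (harc : ∀ i, i < m → g i ∈ S ∧ g (i+1) ∈ S ∧ A (g i) (g (i+1))) :
    ∀ i, i ≤ m → ∀ j, j ≤ m → ReachIn A S (g i) (g j) := by
  intro i hi j hj
  rcases le_or_gt i j with h | h
  · exact reach_chain A S g j i h (fun t ht1 ht2 => harc t (by omega))
  · have h1 : ReachIn A S (g i) (g m) := reach_chain A S g m i hi (fun t _ ht2 => harc t ht2)
    have h2 : ReachIn A S (g 0) (g j) := reach_chain A S g j 0 (Nat.zero_le j)
      (fun t _ ht2 => harc t (by omega))
    rw [hg] at h1
    exact h1.trans h2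

lemma ncard_Icc (a b : ℕ) : (Set.Icc a b).ncard = b + 1 - a := by
  rw [← Nat.card_coe_set_eq]; simp [Nat.card_Icc]

lemma kstrong_reach (hk : 3 ≤ k) (X : Set (Fin (2*k+1))) (hX : X.ncard < k) :
    ∀ d : ℕ, ∀ u : Fin (2*k+1), u ∈ Xᶜ → u + (d : Fin (2*k+1)) ∈ Xᶜ →
      ReachIn (Arc k) Xᶜ u (u + (d : Fin (2*k+1))) := by
  intro d
  induction d using Nat.strong_induction_on with
  | _ d ih =>
    intro u hu hv
    rcases Nat.eq_zero_or_pos d with rfl | hd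
    · rw [Nat.cast_zero, add_zero]
      exact (Relation.ReflTransGen.refl :
        ReachIn (Arc k) Xᶜ u u)
    by_cases hdk : d < k
    · exact Relation.ReflTransGen.single ⟨hu, hv, arcN u d hd (by omega) (by omega)⟩
    by_cases hdk1 : d = k + 1
    · subst hdk1
      exact Relation.ReflTransGen.single ⟨hu, hv, arcN u (k+1) (by omega) le_rfl (by omega)⟩
    have hdge : k ≤ d := le_of_not_gt hdk
    have key : ∀ t : ℕ, 1 ≤ t → t ≤ k+1 → t ≠ k → t ≤ d →
        (u + (t : Fin (2*k+1))) ∈ Xᶜ → ReachIn (Arc k) Xᶜ u (u + (d : Fin (2*k+1))) := by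
      intro t h1 h2 h3 h4 hw
      have e : (u + (t : Fin (2*k+1))) + ((d - t : ℕ) : Fin (2*k+1)) = u + (d : Fin (2*k+1)) := by
        rw [add_assoc, ← Nat.cast_add]
        have : t + (d - t) = d := by omega
        rw [this]
      by_cases htd : t = d
      · subst htd; exact Relation.ReflTransGen.single ⟨hu, hv, arcN u t h1 h2 h3⟩
      have h5 := ih (d - t) (by omega) (u + (t : Fin (2*k+1))) hw (by rw [e]; exact hv)
      rw [e] at h5
      exact Relation.ReflTransGen.head ⟨hu, hw, arcN u t h1 h2 h3⟩ h5
    by_cases hex : ∃ t : ℕ, 1 ≤ t ∧ t ≤ k-1 ∧ (u + (t : Fin (2*k+1))) ∈ Xᶜ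
    · obtain ⟨t, h1, h2, hw⟩ := hex
      exact key t h1 (by omega) (by omega) (by omega) hw
    · push_neg at hex
      have hall : ∀ t : ℕ, 1 ≤ t → t ≤ k-1 → (u + (t : Fin (2*k+1))) ∈ X := by
        intro t h1 h2
        have := hex t h1 h2
        simpa using this
      set Y : Set (Fin (2*k+1)) := (fun t : ℕ => u + (t : Fin (2*k+1))) '' Set.Icc 1 (k-1) with hY
      have hYX : Y ⊆ X := by
        rintro _ ⟨t, ht, rfl⟩
        exact hall t ht.1 ht.2
      have hYcard : Y.ncard = k - 1 := by
        rw [hY, Set.ncard_image_of_injOn, ncard_Icc]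
        · omega
        · intro a ha b hb hab
          have : (a : Fin (2*k+1)) = (b : Fin (2*k+1)) := by
            exact add_left_cancel hab
          exact cast_inj (by simp at ha ⊢; omega) (by simp at hb ⊢; omega) this
      have hXY : X = Y := by
        refine (Set.eq_of_subset_of_ncard_le hYX ?_ (Set.toFinite X)).symm
        rw [hYcard]; omega
      have hnot : ∀ j : ℕ, k+1 ≤ j → j ≤ 2*k → (u + (j : Fin (2*k+1))) ∈ Xᶜ := by
        intro j hj1 hj2 hmem
        rw [hXY] at hmem
        obtain ⟨t, ht, he⟩ := hmem
        have : (j : Fin (2*k+1)) = (t : Fin (2*k+1)) := add_left_cancel he.symm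
        have := cast_inj (by omega) (by simp at ht; omega) this
        simp at ht; omega
      by_cases hdk2 : d = k
      · rw [hdk2] at hv ⊢
        have hchain := reach_chain (Arc k) Xᶜ
          (fun j => u + ((k+1+j : ℕ) : Fin (2*k+1))) (k-1) 0 (by omega) ?_
        · have harc1 : Arc k u (u + ((k+1+0 : ℕ) : Fin (2*k+1))) := by
            simpa using arcN u (k+1) (by omega) le_rfl (by omega)
          have hm0 : (u + ((k+1+0 : ℕ) : Fin (2*k+1))) ∈ Xᶜ := hnot (k+1+0) (by omega) (by omega)
          have hlast : Arc k (u + ((k+1+(k-1) : ℕ) : Fin (2*k+1))) (u + ((k : ℕ) : Fin (2*k+1))) := by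
            have h := arcN (u + ((k+1+(k-1) : ℕ) : Fin (2*k+1))) (k+1) (by omega) le_rfl (by omega)
            have e : (u + ((k+1+(k-1) : ℕ) : Fin (2*k+1))) + ((k+1 : ℕ) : Fin (2*k+1))
                = u + ((k : ℕ) : Fin (2*k+1)) := by
              rw [add_assoc, ← Nat.cast_add]
              have : (k+1+(k-1)) + (k+1) = k + (2*k+1) := by omega
              rw [this, cast_add_n]
            rwa [e] at h
          have hmlast : (u + ((k+1+(k-1) : ℕ) : Fin (2*k+1))) ∈ Xᶜ :=
            hnot (k+1+(k-1)) (by omega) (by omega)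
          exact Relation.ReflTransGen.head ⟨hu, hm0, harc1⟩
            (hchain.tail ⟨hmlast, hv, hlast⟩)
        · intro j hj1 hj2
          refine ⟨hnot (k+1+j) (by omega) (by omega), hnot (k+1+(j+1)) (by omega) (by omega), ?_⟩
          have h := arcN (u + ((k+1+j : ℕ) : Fin (2*k+1))) 1 le_rfl (by omega) (by omega)
          have e : (u + ((k+1+j : ℕ) : Fin (2*k+1))) + ((1 : ℕ) : Fin (2*k+1))
              = u + ((k+1+(j+1) : ℕ) : Fin (2*k+1)) := by
            rw [add_assoc, ← Nat.cast_add, show k+1+j+1 = k+1+(j+1) from by omega]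
          rwa [e] at h
      · exact key (k+1) (by omega) le_rfl (by omega) (by omega) (hnot (k+1) le_rfl (by omega))

lemma kstrong (hk : 3 ≤ k) : KStrong (Arc k) k := by
  constructor
  · rw [Fintype.card_fin]; omega
  · intro X hXlt u hu v hv
    have e : u + (((v - u).val : ℕ) : Fin (2*k+1)) = v := by
      rw [Fin.cast_val_eq_self, add_comm u (v - u), sub_add_cancel]
    have h := kstrong_reach hk X hXlt (v-u).val u hu (by rw [e]; exact hv)
    rwa [e] at h

lemma mem_SS_iff {a : ℕ} (h : a < 2*k+1) :
    ((a : Fin (2*k+1)) ∈ SS k) ↔ ((1 ≤ a ∧ a ≤ k-1) ∨ a = k+1) := by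
  simp [SS, val_cast_lt h]

lemma mem_D_iff (hk : 3 ≤ k) (v : Fin (2*k+1)) :
    v ∈ Set.univ \ SS k ↔ (v.val = 0 ∨ v.val = k ∨ (k+2 ≤ v.val ∧ v.val ≤ 2*k)) := by
  have hv := v.isLt
  simp only [Set.mem_diff, Set.mem_univ, true_and, SS, Set.mem_setOf_eq]
  omega

lemma gS_closed (hk : 3 ≤ k) : ∀ i, i ≤ k → gS k i ∈ SS k := by
  intro i hi
  unfold gS
  split_ifs with h1 h2
  · rw [mem_SS_iff (by omega)]; omega
  · rw [mem_SS_iff (by omega)]; omega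
  · rw [mem_SS_iff (by omega)]; omega

lemma gS_arc (hk : 3 ≤ k) : ∀ i, i < k →
    gS k i ∈ SS k ∧ gS k (i+1) ∈ SS k ∧ Arc k (gS k i) (gS k (i+1)) := by
  intro i hi
  refine ⟨gS_closed hk i (by omega), gS_closed hk (i+1) (by omega), ?_⟩
  unfold gS
  rcases lt_trichotomy (i+1) (k-1) with h | h | h
  · rw [if_pos (by omega), if_pos h]
    have h2 := arcNN (k := k) (i+1) 1 le_rfl (by omega) (by omega)
    rwa [show i+1+1 = i+1+1 from rfl] at h2
  · rw [if_pos (by omega), if_neg (by omega), if_pos h]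
    have h2 := arcNN (k := k) (i+1) 2 (by omega) (by omega) (by omega)
    rwa [show i+1+2 = k+1 from by omega] at h2
  · have hik : i = k - 1 := by omega
    rw [if_neg (by omega), if_pos hik, if_neg (by omega), if_neg (by omega)]
    have h2 := arcNN (k := k) (k+1) (k+1) (by omega) le_rfl (by omega)
    rwa [show (k+1)+(k+1) = 1 + (2*k+1) from by omega, cast_add_n] at h2

lemma gS_cyc (hk : 3 ≤ k) : gS k k = gS k 0 := by
  unfold gS
  rw [if_neg (by omega), if_neg (by omega), if_pos (by omega)]

lemma exists_gS (hk : 3 ≤ k) : ∀ v ∈ SS k, ∃ i ≤ k, gS k i = v := by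
  intro v hv
  rcases hv with ⟨h1, h2⟩ | h
  · refine ⟨v.val - 1, by omega, ?_⟩
    unfold gS
    rw [if_pos (by omega), show v.val - 1 + 1 = v.val from by omega]
    exact Fin.cast_val_eq_self v
  · refine ⟨k-1, by omega, ?_⟩
    unfold gS
    rw [if_neg (by omega), if_pos rfl]
    refine Fin.ext ?_
    rw [val_cast_lt (by omega), h]

lemma reach_SS (hk : 3 ≤ k) : ∀ u ∈ SS k, ∀ v ∈ SS k, ReachIn (Arc k) (SS k) u v := by
  intro u hu v hv
  obtain ⟨i, hi, rfl⟩ := exists_gS hk u hu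
  obtain ⟨j, hj, rfl⟩ := exists_gS hk v hv
  exact reach_cycle _ _ _ k (gS_cyc hk) (gS_arc hk) i hi j hj

lemma M2_subset_D (hk : 3 ≤ k) : M2 k ⊆ Set.univ \ SS k := by
  intro v hv
  rw [mem_D_iff hk]
  rcases hv with h | h
  · exact Or.inr (Or.inl h)
  · exact Or.inr (Or.inr h)

lemma gM_closed (hk : 3 ≤ k) : ∀ i, i ≤ k → gM k i ∈ M2 k := by
  intro i hi
  unfold gM
  split_ifs with h1 h2
  · exact Or.inl (val_cast_lt (by omega))
  · refine Or.inr ⟨?_, ?_⟩ <;> rw [val_cast_lt (by omega)] <;> omega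
  · exact Or.inl (val_cast_lt (by omega))

lemma gM_arc (hk : 3 ≤ k) : ∀ i, i < k →
    gM k i ∈ Set.univ \ SS k ∧ gM k (i+1) ∈ Set.univ \ SS k ∧ Arc k (gM k i) (gM k (i+1)) := by
  intro i hi
  refine ⟨M2_subset_D hk (gM_closed hk i (by omega)),
    M2_subset_D hk (gM_closed hk (i+1) (by omega)), ?_⟩
  unfold gM
  rcases Nat.eq_zero_or_pos i with rfl | hipos
  · rw [if_pos rfl, if_neg (by omega), if_pos (by omega)]
    have h2 := arcNN (k := k) k 2 (by omega) (by omega) (by omega)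
    rwa [show k+2 = k+1+(0+1) from by omega] at h2
  · rcases lt_or_ge (i+1) k with h | h
    · rw [if_neg (by omega), if_pos (by omega), if_neg (by omega), if_pos (by omega)]
      have h2 := arcNN (k := k) (k+1+i) 1 le_rfl (by omega) (by omega)
      rwa [show k+1+i+1 = k+1+(i+1) from by omega] at h2
    · have hik : i = k - 1 := by omega
      rw [if_neg (by omega), if_pos (by omega), if_neg (by omega), if_neg (by omega)]
      have h2 := arcNN (k := k) (k+1+i) (k+1) (by omega) le_rfl (by omega)
      rwa [show k+1+i+(k+1) = k + (2*k+1) from by omega, cast_add_n] at h2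

lemma gM_cyc (hk : 3 ≤ k) : gM k k = gM k 0 := by
  unfold gM
  rw [if_neg (by omega), if_neg (by omega), if_pos rfl]

lemma exists_gM (hk : 3 ≤ k) : ∀ v ∈ M2 k, ∃ i ≤ k, gM k i = v := by
  intro v hv
  rcases hv with h | h
  · refine ⟨0, by omega, ?_⟩
    unfold gM
    rw [if_pos rfl]
    refine Fin.ext ?_
    rw [val_cast_lt (by omega), h]
  · refine ⟨v.val - (k+1), by omega, ?_⟩
    unfold gM
    rw [if_neg (by omega), if_pos (by omega), show k+1+(v.val - (k+1)) = v.val from by omega]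
    exact Fin.cast_val_eq_self v

lemma reach_M2 (hk : 3 ≤ k) :
    ∀ u ∈ M2 k, ∀ v ∈ M2 k, ReachIn (Arc k) (Set.univ \ SS k) u v := by
  intro u hu v hv
  obtain ⟨i, hi, rfl⟩ := exists_gM hk u hu
  obtain ⟨j, hj, rfl⟩ := exists_gM hk v hv
  exact reach_cycle _ _ _ k (gM_cyc hk) (gM_arc hk) i hi j hj

lemma arc_zero (hk : 3 ≤ k) {w : Fin (2*k+1)} (h : Arc k 0 w) : w ∈ SS k := by
  obtain ⟨t, h1, h2, h3, h4⟩ := h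
  rw [show ((0 : Fin (2*k+1)).val) = 0 from rfl, zero_add, Nat.mod_eq_of_lt (by omega)] at h4
  simp only [SS, Set.mem_setOf_eq]
  omega

lemma reach_zero (hk : 3 ≤ k) {u : Fin (2*k+1)}
    (h : ReachIn (Arc k) (Set.univ \ SS k) 0 u) : u = 0 := by
  rcases Relation.ReflTransGen.cases_head h with h' | ⟨c, ⟨_, hc, harc⟩, _⟩
  · exact h'.symm
  · exact absurd (arc_zero hk harc) hc.2

lemma scc_S (hk : 3 ≤ k) (N : Set (Fin (2*k+1))) (h : IsSCCIn (Arc k) (SS k) N) :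
    N = SS k := by
  obtain ⟨w, hw, rfl⟩ := h
  ext u
  simp only [Set.mem_setOf_eq]
  exact ⟨fun h => h.1, fun hu => ⟨hu, reach_SS hk u hu w hw, reach_SS hk w hw u hu⟩⟩

lemma isSCC_S (hk : 3 ≤ k) : IsSCCIn (Arc k) (SS k) (SS k) := by
  refine ⟨((1:ℕ) : Fin (2*k+1)), ?_, ?_⟩
  · rw [mem_SS_iff (by omega)]; omega
  · ext u
    simp only [Set.mem_setOf_eq]
    constructor
    · intro hu
      have h1 : ((1:ℕ) : Fin (2*k+1)) ∈ SS k := by rw [mem_SS_iff (by omega)]; omega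
      exact ⟨hu, reach_SS hk u hu _ h1, reach_SS hk _ h1 u hu⟩
    · exact fun h => h.1

lemma scc_D (hk : 3 ≤ k) (M : Set (Fin (2*k+1)))
    (h : IsSCCIn (Arc k) (Set.univ \ SS k) M) :
    M = {(0 : Fin (2*k+1))} ∨ M = M2 k := by
  obtain ⟨v, hv, rfl⟩ := h
  have hv' := (mem_D_iff hk v).mp hv
  rcases hv' with h0 | hM2'
  · left
    have hv0 : v = 0 := Fin.ext h0
    subst hv0
    ext u
    simp only [Set.mem_setOf_eq, Set.mem_singleton_iff]
    constructor
    · rintro ⟨_, _, h2⟩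
      exact reach_zero hk h2
    · rintro rfl
      exact ⟨hv, Relation.ReflTransGen.refl, Relation.ReflTransGen.refl⟩
  · right
    have hvM : v ∈ M2 k := by
      simp only [M2, Set.mem_setOf_eq]; tauto
    ext u
    simp only [Set.mem_setOf_eq]
    constructor
    · rintro ⟨hu, h1, h2⟩
      have hu' := (mem_D_iff hk u).mp hu
      rcases hu' with h0 | hM
      · exfalso
        have hu0 : u = 0 := Fin.ext h0
        subst hu0
        have := reach_zero hk h1
        rw [this] at hvM
        simp only [M2, Set.mem_setOf_eq] at hvM
        have : ((0 : Fin (2*k+1)).val) = 0 := rfl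
        omega
      · simp only [M2, Set.mem_setOf_eq]; tauto
    · intro hu
      exact ⟨M2_subset_D hk hu, reach_M2 hk u hu v hvM, reach_M2 hk v hvM u hu⟩

lemma ncard_cast_image (T : Set ℕ) (hT : ∀ a ∈ T, a < 2*k+1) :
    ((fun a : ℕ => (a : Fin (2*k+1))) '' T).ncard = T.ncard :=
  Set.ncard_image_of_injOn (fun a ha b hb h => cast_inj (hT a ha) (hT b hb) h)

lemma ncard_SS (hk : 3 ≤ k) : (SS k).ncard = k := by
  have he : SS k = (fun a : ℕ => (a : Fin (2*k+1))) '' (insert (k+1) (Set.Icc 1 (k-1))) := by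
    ext v
    simp only [SS, Set.mem_setOf_eq, Set.mem_image, Set.mem_insert_iff, Set.mem_Icc]
    constructor
    · intro h
      exact ⟨v.val, by tauto, Fin.cast_val_eq_self v⟩
    · rintro ⟨a, ha, rfl⟩
      rw [val_cast_lt (by omega)]
      omega
  rw [he, ncard_cast_image _ (by intro a ha; simp only [Set.mem_insert_iff, Set.mem_Icc] at ha; omega)]
  rw [Set.ncard_insert_of_notMem (by simp only [Set.mem_Icc]; omega) (Set.finite_Icc _ _), ncard_Icc]
  omega

lemma ncard_M2 (hk : 3 ≤ k) : (M2 k).ncard = k := by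
  have he : M2 k = (fun a : ℕ => (a : Fin (2*k+1))) '' (insert k (Set.Icc (k+2) (2*k))) := by
    ext v
    simp only [M2, Set.mem_setOf_eq, Set.mem_image, Set.mem_insert_iff, Set.mem_Icc]
    constructor
    · intro h
      exact ⟨v.val, by tauto, Fin.cast_val_eq_self v⟩
    · rintro ⟨a, ha, rfl⟩
      rw [val_cast_lt (by omega)]
      omega
  rw [he, ncard_cast_image _ (by intro a ha; simp only [Set.mem_insert_iff, Set.mem_Icc] at ha; omega)]
  rw [Set.ncard_insert_of_notMem (by simp only [Set.mem_Icc]; omega) (Set.finite_Icc _ _), ncard_Icc]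
  omega

lemma cond3 (hk : 3 ≤ k) : ∀ M, IsSCCIn (Arc k) (Set.univ \ SS k) M →
    ∃ N, IsSCCIn (Arc k) (SS k) N ∧ HasArc (Arc k) M N := by
  intro M hM
  refine ⟨SS k, isSCC_S hk, ?_⟩
  rcases scc_D hk M hM with rfl | rfl
  · refine ⟨0, rfl, ((1:ℕ) : Fin (2*k+1)), by rw [mem_SS_iff (by omega)]; omega, ?_⟩
    have h := arcNN (k := k) 0 1 le_rfl (by omega) (by omega)
    simpa using h
  · refine ⟨((k:ℕ) : Fin (2*k+1)), ?_, ((k+1:ℕ) : Fin (2*k+1)),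
      by rw [mem_SS_iff (by omega)]; omega, ?_⟩
    · exact Or.inl (val_cast_lt (by omega))
    · exact arcNN (k := k) k 1 le_rfl (by omega) (by omega)

lemma SS_nonempty (hk : 3 ≤ k) : (SS k).Nonempty :=
  ⟨((1:ℕ) : Fin (2*k+1)), by rw [mem_SS_iff (by omega)]; omega⟩

lemma cond4 (hk : 3 ≤ k) : ∀ M N, IsSCCIn (Arc k) (Set.univ \ SS k) M →
    IsSCCIn (Arc k) (SS k) N → HasArc (Arc k) M N → M.ncard ≤ N.ncard := by
  intro M N hM hN _
  rw [scc_S hk N hN, ncard_SS hk]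
  rcases scc_D hk M hM with rfl | rfl
  · rw [Set.ncard_singleton]; omega
  · rw [ncard_M2 hk]

lemma main (hk : 3 ≤ k) :
    KStrong (Arc k) k ∧ StrongSafeSet (Arc k) (SS k) ∧ (SS k).ncard = k :=
  ⟨kstrong hk, ⟨⟨SS_nonempty hk, Set.subset_univ _, cond3 hk, cond4 hk⟩, reach_SS hk⟩,
    ncard_SS hk⟩

end Stmt12

theorem stmt12 (k : ℕ) (hk : 3 ≤ k) :
    let A : Fin (2 * k + 1) → Fin (2 * k + 1) → Prop := fun i j =>
      ∃ t : ℕ, 1 ≤ t ∧ t ≤ k + 1 ∧ t ≠ k ∧ j.val = (i.val + t) % (2 * k + 1)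
    let S : Set (Fin (2 * k + 1)) := {v | (1 ≤ v.val ∧ v.val ≤ k - 1) ∨ v.val = k + 1}
    KStrong A k ∧ StrongSafeSet A S ∧ S.ncard = k := by
  intro A S
  exact Stmt12.main hk
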